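/- arXiv:2512.17244 — 3 statements merged into one kernel-verified Lean document; each statement's English description precedes it below -/
import Mathlib

section
/- Let Γ = (V,A) be a finite connected digraph, let G ≤ Aut(Γ) be vertex-transitive, and suppose Γ is (G,s)-arc-transitive with s ≥ 2. Let N be a normal subgroup of G having at least 3 orbits on V. Then the quotient Γ_N is a digraph (i.e. its arc set A_N has no loops and (U,U') ∈ A_N implies (U',U) ∉ A_N), Γ_N is connected, N lies in the kernel of the induced action of G on V_N, and the induced action of G/N on Γ_N is vertex-transitive and transitive on the s-arcs of Γ_N. -/
/-!
Statement 0: normal quotients of (G,s)-arc-transitive digraphs (Proposition p:quot(a)).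
-/

namespace ArcTransDigraph

variable {V : Type*}

/-- The arc set of a digraph is asymmetric (in particular loopless). -/
def IsDigraph (A : V → V → Prop) : Prop := ∀ u v : V, A u v → ¬ A v u

/-- Connectivity of the underlying undirected graph. -/
def Connected (A : V → V → Prop) : Prop :=
  ∀ u v : V, Relation.ReflTransGen (fun a b => A a b ∨ A b a) u v

/-- `G` consists of automorphisms of the digraph `(V, A)`. -/
def PreservesArcs (A : V → V → Prop) (G : Subgroup (Equiv.Perm V)) : Prop :=
  ∀ g ∈ G, ∀ u v : V, A u v → A (g u) (g v)

/-- `G` is transitive on vertices. -/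
def VertexTransitive (G : Subgroup (Equiv.Perm V)) : Prop :=
  ∀ u v : V, ∃ g ∈ G, g u = v

/-- `p` is an `s`-arc of the digraph with arc set `A`. -/
def IsArcSeq (A : V → V → Prop) (s : ℕ) (p : Fin (s + 1) → V) : Prop :=
  ∀ i : Fin s, A (p i.castSucc) (p i.succ)

/-- `G` is transitive on the `s`-arcs of the digraph with arc set `A`. -/
def ArcTransitive (A : V → V → Prop) (G : Subgroup (Equiv.Perm V)) (s : ℕ) : Prop :=
  ∀ p q : Fin (s + 1) → V, IsArcSeq A s p → IsArcSeq A s q →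
    ∃ g ∈ G, ∀ i : Fin (s + 1), g (p i) = q i

/-- `N` is a subgroup of `G` which is normal in `G`. -/
def NormalIn (N G : Subgroup (Equiv.Perm V)) : Prop :=
  N ≤ G ∧ ∀ g ∈ G, ∀ x ∈ N, g * x * g⁻¹ ∈ N

/-- The `N`-orbit of a vertex, as a point of the orbit space `V_N`. -/
def orbMk (N : Subgroup (Equiv.Perm V)) (v : V) : Quotient (MulAction.orbitRel N V) :=
  Quotient.mk _ v

/-- The arc set of the quotient digraph `Γ_N`. -/
def quotArc (A : V → V → Prop) (N : Subgroup (Equiv.Perm V)) :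
    Quotient (MulAction.orbitRel N V) → Quotient (MulAction.orbitRel N V) → Prop :=
  fun U U' => ∃ u u' : V, orbMk N u = U ∧ orbMk N u' = U' ∧ A u u'

lemma orbMk_eq_iff {N : Subgroup (Equiv.Perm V)} {u v : V} :
    orbMk N u = orbMk N v ↔ ∃ n : N, (n : Equiv.Perm V) v = u := by
  constructor
  · intro h
    obtain ⟨n, hn⟩ := Quotient.exact h
    exact ⟨n, hn⟩
  · rintro ⟨n, rfl⟩
    exact Quotient.sound (MulAction.mem_orbit v n)

lemma orbMk_apply {N : Subgroup (Equiv.Perm V)} {x : Equiv.Perm V} (hx : x ∈ N) (v : V) :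
    orbMk N (x v) = orbMk N v :=
  orbMk_eq_iff.mpr ⟨⟨x, hx⟩, rfl⟩

/-- translate an arc to a prescribed start vertex in the same orbit -/
lemma arc_transport_start {A : V → V → Prop} {G N : Subgroup (Equiv.Perm V)}
    (hAut : PreservesArcs A G) (hNG : N ≤ G) {a b c : V}
    (hab : A a b) (h : orbMk N a = orbMk N c) :
    ∃ d : V, A c d ∧ orbMk N d = orbMk N b := by
  obtain ⟨n, hn⟩ := orbMk_eq_iff.mp h.symm
  refine ⟨(n : Equiv.Perm V) b, ?_, orbMk_apply n.2 b⟩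
  have := hAut _ (hNG n.2) a b hab
  rwa [hn] at this

/-- translate an arc to a prescribed end vertex in the same orbit -/
lemma arc_transport_end {A : V → V → Prop} {G N : Subgroup (Equiv.Perm V)}
    (hAut : PreservesArcs A G) (hNG : N ≤ G) {a b d : V}
    (hab : A a b) (h : orbMk N b = orbMk N d) :
    ∃ c : V, A c d ∧ orbMk N c = orbMk N a := by
  obtain ⟨n, hn⟩ := orbMk_eq_iff.mp h.symm
  refine ⟨(n : Equiv.Perm V) a, ?_, orbMk_apply n.2 a⟩
  have := hAut _ (hNG n.2) a b hab
  rwa [hn] at this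

/-- elements of `G` map orbits to orbits -/
lemma orbMk_g_eq {G N : Subgroup (Equiv.Perm V)}
    (hN : NormalIn N G) {g : Equiv.Perm V} (hg : g ∈ G) {u v : V}
    (h : orbMk N u = orbMk N v) : orbMk N (g u) = orbMk N (g v) := by
  obtain ⟨n, hn⟩ := orbMk_eq_iff.mp h
  have key : (g * (n : Equiv.Perm V) * g⁻¹) (g v) = g u := by
    simp [Equiv.Perm.mul_apply, hn]
  calc orbMk N (g u) = orbMk N ((g * (n : Equiv.Perm V) * g⁻¹) (g v)) := by rw [key]
    _ = orbMk N (g v) := orbMk_apply (hN.2 g hg _ n.2) _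

lemma quotArc_lift_start {A : V → V → Prop} {G N : Subgroup (Equiv.Perm V)}
    (hAut : PreservesArcs A G) (hNG : N ≤ G)
    {W W' : Quotient (MulAction.orbitRel N V)} (h : quotArc A N W W')
    {u : V} (hu : orbMk N u = W) : ∃ u', A u u' ∧ orbMk N u' = W' := by
  obtain ⟨a, b, ha, hb, hab⟩ := h
  obtain ⟨d, hd, hdb⟩ := arc_transport_start hAut hNG hab (ha.trans hu.symm)
  exact ⟨d, hd, hdb.trans hb⟩

lemma quotArc_lift_end {A : V → V → Prop} {G N : Subgroup (Equiv.Perm V)}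
    (hAut : PreservesArcs A G) (hNG : N ≤ G)
    {W W' : Quotient (MulAction.orbitRel N V)} (h : quotArc A N W W')
    {u : V} (hu : orbMk N u = W') : ∃ w, A w u ∧ orbMk N w = W := by
  obtain ⟨a, b, ha, hb, hab⟩ := h
  obtain ⟨c, hc, hca⟩ := arc_transport_end hAut hNG hab (hb.trans hu.symm)
  exact ⟨c, hc, hca.trans ha⟩

lemma isArcSeq_snoc {A : V → V → Prop} {t : ℕ} {p : Fin (t + 1) → V}
    (hp : IsArcSeq A t p) {w : V} (hw : A (p (Fin.last t)) w) :
    IsArcSeq A (t + 1) (Fin.snoc p w) := by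
  intro i
  refine Fin.lastCases ?_ (fun j => ?_) i
  · simpa [Fin.snoc_castSucc, Fin.snoc_last] using hw
  · rw [Fin.succ_castSucc]
    rw [Fin.snoc_castSucc, Fin.snoc_castSucc]; exact hp j

lemma isArcSeq_init {A : V → V → Prop} {t : ℕ} {p : Fin (t + 2) → V}
    (hp : IsArcSeq A (t + 1) p) : IsArcSeq A t (p ∘ Fin.castSucc) := by
  intro i
  have := hp i.castSucc
  simpa [Function.comp] using this


/-- lift a quotient arc-sequence to an arc-sequence in Γ -/
lemma lift_arcSeq {A : V → V → Prop} {G N : Subgroup (Equiv.Perm V)}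
    (hAut : PreservesArcs A G) (hNG : N ≤ G) :
    ∀ (t : ℕ) (p : Fin (t + 1) → Quotient (MulAction.orbitRel N V)),
      IsArcSeq (quotArc A N) t p →
      ∃ q : Fin (t + 1) → V, IsArcSeq A t q ∧ ∀ i, orbMk N (q i) = p i := by
  intro t
  induction t with
  | zero =>
    intro p _
    obtain ⟨v, hv⟩ := Quot.exists_rep (p 0)
    refine ⟨fun _ => v, fun i => i.elim0, fun i => ?_⟩
    have hi : i = 0 := Fin.ext (by omega)
    rw [hi]; exact hv
  | succ t ih =>
    intro p hp
    obtain ⟨q, hq, hqo⟩ := ih (p ∘ Fin.castSucc) (isArcSeq_init hp)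
    obtain ⟨u', hu', ho'⟩ := quotArc_lift_start hAut hNG (hp (Fin.last t)) (hqo (Fin.last t))
    refine ⟨Fin.snoc q u', isArcSeq_snoc hq hu', fun i => ?_⟩
    refine Fin.lastCases ?_ (fun j => ?_) i
    · rw [show Fin.last (t+1) = (Fin.last t).succ from rfl]
      simpa [Fin.snoc_last] using ho'
    · simpa [Fin.snoc_castSucc] using hqo j

/-- every vertex has an out-neighbour -/
lemma forall_out {A : V → V → Prop} {G : Subgroup (Equiv.Perm V)}
    (hAut : PreservesArcs A G) (hvt : VertexTransitive G) {a b : V} (hab : A a b) :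
    ∀ v : V, ∃ w, A v w := by
  intro v
  obtain ⟨g, hg, hga⟩ := hvt a v
  exact ⟨g b, hga ▸ hAut g hg a b hab⟩

lemma extend_many {A : V → V → Prop} (hA : ∀ v : V, ∃ w, A v w) (t : ℕ) :
    ∀ (m : ℕ) (p : Fin (t + 1) → V), IsArcSeq A t p →
      ∃ q : Fin (t + m + 1) → V, IsArcSeq A (t + m) q ∧
        ∀ i : Fin (t + 1), q (Fin.castLE (by omega) i) = p i := by
  intro m
  induction m with
  | zero =>
    exact fun p hp => ⟨p, hp, fun i => by
      rw [show Fin.castLE (by omega) i = i from Fin.ext rfl]⟩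
  | succ m ih =>
    intro p hp
    obtain ⟨q, hq, hqe⟩ := ih p hp
    obtain ⟨w, hw⟩ := hA (q (Fin.last (t + m)))
    refine ⟨Fin.snoc q w, isArcSeq_snoc hq hw, fun i => ?_⟩
    have : (Fin.castLE (by omega : t + 1 ≤ t + (m+1) + 1) i) =
        Fin.castSucc (Fin.castLE (by omega : t + 1 ≤ t + m + 1) i) := Fin.ext rfl
    rw [this, Fin.snoc_castSucc]
    exact hqe i

lemma arcTrans_le {A : V → V → Prop} {G : Subgroup (Equiv.Perm V)}
    (hA : ∀ v : V, ∃ w, A v w) {s t : ℕ} (hts : t ≤ s)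
    (hat : ArcTransitive A G s) : ArcTransitive A G t := by
  obtain ⟨m, rfl⟩ : ∃ m, s = t + m := ⟨s - t, by omega⟩
  intro p q hp hq
  obtain ⟨p', hp', hpe⟩ := extend_many hA t m p hp
  obtain ⟨q', hq', hqe⟩ := extend_many hA t m q hq
  obtain ⟨g, hg, hgi⟩ := hat p' q' hp' hq'
  refine ⟨g, hg, fun i => ?_⟩
  rw [← hpe i, ← hqe i]
  exact hgi _

lemma isArcSeq_two {A : V → V → Prop} {a b c : V} (hab : A a b) (hbc : A b c) :
    IsArcSeq A 2 ![a, b, c] := by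
  intro i
  fin_cases i <;> simpa

/-- If one 2-arc has its endpoints in the same N-orbit, then all do. -/
lemma two_arc_uniform {A : V → V → Prop} {G N : Subgroup (Equiv.Perm V)}
    (hN : NormalIn N G) (at2 : ArcTransitive A G 2) {a b c : V}
    (hab : A a b) (hbc : A b c) (h : orbMk N a = orbMk N c) :
    ∀ {x y z : V}, A x y → A y z → orbMk N x = orbMk N z := by
  intro x y z hxy hyz
  obtain ⟨g, hg, hgi⟩ := at2 ![a, b, c] ![x, y, z] (isArcSeq_two hab hbc) (isArcSeq_two hxy hyz)
  have h0 : g a = x := by simpa using hgi 0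
  have h2 : g c = z := by simpa using hgi 2
  rw [← h0, ← h2]
  exact orbMk_g_eq hN hg h

lemma card_le_two {Q : Type*} [Finite Q] {U U' : Q} (h : ∀ W : Q, W = U ∨ W = U') :
    Nat.card Q ≤ 2 := by
  classical
  have hf : Function.Injective (fun W : Q => if W = U then (0 : Fin 2) else 1) := by
    intro W1 W2 h12
    by_cases h1 : W1 = U <;> by_cases h2 : W2 = U
    · rw [h1, h2]
    · simp [h1, h2] at h12
    · simp [h1, h2] at h12
    · rcases h W1 with h1' | h1'
      · exact absurd h1' h1
      · rcases h W2 with h2' | h2'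
        · exact absurd h2' h2
        · rw [h1', h2']
  calc Nat.card Q ≤ Nat.card (Fin 2) := Nat.card_le_card_of_injective _ hf
    _ = 2 := by simp


theorem normal_quotient_arc_transitive
    [Finite V] (A : V → V → Prop) (G N : Subgroup (Equiv.Perm V)) (s : ℕ)
    (hdig : IsDigraph A) (hconn : Connected A) (hAut : PreservesArcs A G)
    (hvt : VertexTransitive G) (hs : 2 ≤ s) (hat : ArcTransitive A G s)
    (hN : NormalIn N G)
    (horb : 3 ≤ Nat.card (Quotient (MulAction.orbitRel N V))) :
    -- Γ_N is a digraph (no loops, and (U,U') an arc implies (U',U) not an arc)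
    IsDigraph (quotArc A N) ∧
    -- Γ_N is connected
    Connected (quotArc A N) ∧
    -- N lies in the kernel of the induced action of G on V_N
    (∀ x ∈ N, ∀ v : V, orbMk N (x v) = orbMk N v) ∧
    -- the induced action of G/N on Γ_N is vertex-transitive
    (∀ U U' : Quotient (MulAction.orbitRel N V),
      ∃ g ∈ G, ∀ u : V, orbMk N u = U → orbMk N (g u) = U') ∧
    -- the induced action of G/N on Γ_N is transitive on s-arcs
    (∀ p q : Fin (s + 1) → Quotient (MulAction.orbitRel N V),
      IsArcSeq (quotArc A N) s p → IsArcSeq (quotArc A N) s q →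
      ∃ g ∈ G, ∀ (i : Fin (s + 1)) (u : V), orbMk N u = p i → orbMk N (g u) = q i) := by
  have hNG : N ≤ G := hN.1
  refine ⟨?_, ?_, ?_, ?_, ?_⟩
  · -- IsDigraph
    intro U U' h h'
    obtain ⟨u, u', hu, hu', huu'⟩ := h
    have hA : ∀ v : V, ∃ w, A v w := forall_out hAut hvt huu'
    have at2 : ArcTransitive A G 2 := arcTrans_le hA hs hat
    obtain ⟨w, hwu, hw⟩ := quotArc_lift_end hAut hNG h' hu
    -- 2-arc (w, u, u') with orbMk w = orbMk u'
    have unif : ∀ {x y z : V}, A x y → A y z → orbMk N x = orbMk N z :=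
      fun hxy hyz => two_arc_uniform hN at2 hwu huu' (hw.trans hu'.symm) hxy hyz
    have step : ∀ {v x : V}, (orbMk N v = U ∨ orbMk N v = U') → (A v x ∨ A x v) →
        (orbMk N x = U ∨ orbMk N x = U') := by
      rintro v x (hv | hv) (hvx | hvx)
      · obtain ⟨b', hb', hob⟩ := arc_transport_start hAut hNG hvx (hv.trans hu.symm)
        exact Or.inr (hob.symm.trans ((unif hwu hb').symm.trans hw))
      · obtain ⟨a', ha', hoa⟩ := arc_transport_end hAut hNG hvx (hv.trans hu.symm)
        exact Or.inr (hoa.symm.trans ((unif ha' huu').trans hu'))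
      · obtain ⟨b', hb', hob⟩ := arc_transport_start hAut hNG hvx (hv.trans hu'.symm)
        exact Or.inl (hob.symm.trans ((unif huu' hb').symm.trans hu))
      · obtain ⟨a', ha', hoa⟩ := arc_transport_end hAut hNG hvx (hv.trans hw.symm)
        exact Or.inl (hoa.symm.trans ((unif ha' hwu).trans hu))
    have all : ∀ v : V, orbMk N v = U ∨ orbMk N v = U' := by
      intro v
      have hwalk := hconn u v
      induction hwalk with
      | refl => exact Or.inl hu
      | tail h1 h2 ih => exact step ih h2
    have hall : ∀ W : Quotient (MulAction.orbitRel N V), W = U ∨ W = U' := by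
      intro W
      obtain ⟨v, rfl⟩ := Quot.exists_rep W
      exact all v
    have := card_le_two hall
    omega
  · -- Connected
    have walk_map : ∀ {a b : V}, Relation.ReflTransGen (fun x y => A x y ∨ A y x) a b →
        Relation.ReflTransGen (fun X Y => quotArc A N X Y ∨ quotArc A N Y X)
          (orbMk N a) (orbMk N b) := by
      intro a b hab
      induction hab with
      | refl => exact Relation.ReflTransGen.refl
      | tail h1 h2 ih =>
        refine ih.tail ?_
        rcases h2 with h2 | h2
        · exact Or.inl ⟨_, _, rfl, rfl, h2⟩
        · exact Or.inr ⟨_, _, rfl, rfl, h2⟩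
    intro U U'
    obtain ⟨a, rfl⟩ := Quot.exists_rep U
    obtain ⟨b, rfl⟩ := Quot.exists_rep U'
    exact walk_map (hconn a b)
  · -- kernel
    exact fun x hx v => orbMk_apply hx v
  · -- vertex transitivity
    intro U U'
    obtain ⟨a, rfl⟩ := Quot.exists_rep U
    obtain ⟨b, rfl⟩ := Quot.exists_rep U'
    obtain ⟨g, hg, hga⟩ := hvt a b
    refine ⟨g, hg, fun u hu => ?_⟩
    have := orbMk_g_eq hN hg (hu : orbMk N u = orbMk N a)
    rw [this, hga]
    rfl
  · -- s-arc transitivity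
    intro p q hp hq
    obtain ⟨p', hp', hpe⟩ := lift_arcSeq hAut hNG s p hp
    obtain ⟨q', hq', hqe⟩ := lift_arcSeq hAut hNG s q hq
    obtain ⟨g, hg, hgi⟩ := hat p' q' hp' hq'
    refine ⟨g, hg, fun i u hu => ?_⟩
    have h1 : orbMk N u = orbMk N (p' i) := hu.trans (hpe i).symm
    have := orbMk_g_eq hN hg h1
    rw [this, hgi i, hqe i]

end ArcTransDigraph
end

section
/- Let Γ = (V,A) be a finite connected bipartite digraph with parts Δ, Δ', let G ≤ Aut(Γ) be vertex-transitive, and suppose Γ is (G,s)-arc-transitive with s ≥ 4. Let G^+ be the index-2 subgroup of G fixing Δ and Δ' setwise, and let Γ' = (Δ, A_2) be the bipartite half on Δ. Then: Γ' is connected; G^+ preserves A_2, acts transitively on Δ, and acts transitively on the floor(s/2)-arcs of Γ'; and either Γ' is a digraph (i.e. (u,w) ∈ A_2 implies (w,u) ∉ A_2), or Γ is isomorphic to the directed cycle C_4→ (in which case G ≅ Z_4, |Δ| = 2 and Γ' is the complete graph K_2 with both ordered pairs as arcs). -/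
/-!
Statement 0: normal quotients of (G,s)-arc-transitive digraphs (Proposition p:quot(a)).
-/

namespace ArcTransDigraph

variable {V : Type*}

/-- The digraph with arc set `B` on vertex set `α` is isomorphic to the directed cycle
`C_r→`, whose vertex set is `Z_r` with arcs `(i, i+1)`. -/
def IsoDirectedCycle {α : Type*} (B : α → α → Prop) (r : ℕ) : Prop :=
  ∃ e : α ≃ ZMod r, ∀ a b : α, B a b ↔ e b = e a + 1

/-- `Δ, Δ'` form a bipartition of the digraph with arc set `A`. -/
def IsBipartition (A : V → V → Prop) (Δ Δ' : Set V) : Prop :=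
  Disjoint Δ Δ' ∧ Δ ∪ Δ' = Set.univ ∧
    ∀ u v : V, A u v → ((u ∈ Δ ∧ v ∈ Δ') ∨ (u ∈ Δ' ∧ v ∈ Δ))

/-- The arc set `A_2` of the bipartite half of `Γ = (V,A)` on the part `Δ`. -/
def halfArc (A : V → V → Prop) (Δ Δ' : Set V) : V → V → Prop :=
  fun u w => u ∈ Δ ∧ w ∈ Δ ∧ ∃ v ∈ Δ', A u v ∧ A v w

lemma arc_iff {A : V → V → Prop} {G : Subgroup (Equiv.Perm V)}
    (hAut : PreservesArcs A G) {g : Equiv.Perm V} (hg : g ∈ G) (u v : V) :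
    A u v ↔ A (g u) (g v) := by
  constructor
  · exact hAut g hg u v
  · intro h
    have := hAut g⁻¹ (inv_mem hg) _ _ h
    simpa using this

lemma mem_part' {A : V → V → Prop} {Δ Δ' : Set V} (hbip : IsBipartition A Δ Δ')
    (v : V) : v ∈ Δ' ↔ v ∉ Δ := by
  obtain ⟨hd, hu, -⟩ := hbip
  constructor
  · intro h h'
    exact Set.disjoint_left.mp hd h' h
  · intro h
    have : v ∈ Δ ∪ Δ' := hu ▸ Set.mem_univ v
    rcases this with h' | h'
    · exact absurd h' h
    · exact h'

lemma flip_part {A : V → V → Prop} {Δ Δ' : Set V} (hbip : IsBipartition A Δ Δ')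
    {b c : V} (h : A b c ∨ A c b) : (c ∈ Δ) ↔ (b ∉ Δ) := by
  have h1 := mem_part' hbip b
  have h2 := mem_part' hbip c
  rcases h with h | h
  · rcases hbip.2.2 _ _ h with ⟨ha, hb⟩ | ⟨ha, hb⟩ <;> tauto
  · rcases hbip.2.2 _ _ h with ⟨ha, hb⟩ | ⟨ha, hb⟩ <;> tauto

lemma part_dichotomy {A : V → V → Prop} {G : Subgroup (Equiv.Perm V)} {Δ Δ' : Set V}
    (hconn : Connected A) (hAut : PreservesArcs A G) (hbip : IsBipartition A Δ Δ')
    {g : Equiv.Perm V} (hg : g ∈ G) :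
    (∀ v, v ∈ Δ ↔ g v ∈ Δ) ∨ (∀ v, v ∈ Δ ↔ g v ∈ Δ') := by
  classical
  rcases isEmpty_or_nonempty V with hV | ⟨⟨v0⟩⟩
  · exact Or.inl fun v => isEmptyElim v
  have key : ∀ v, ((v ∈ Δ) ↔ (v0 ∈ Δ)) ↔ ((g v ∈ Δ) ↔ (g v0 ∈ Δ)) := by
    intro v
    induction hconn v0 v with
    | refl => tauto
    | @tail b c hb hstep ih =>
      have h1 : (c ∈ Δ) ↔ (b ∉ Δ) := flip_part hbip hstep
      have h2 : (g c ∈ Δ) ↔ (g b ∉ Δ) := by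
        refine flip_part hbip ?_
        rcases hstep with h | h
        · exact Or.inl (hAut g hg _ _ h)
        · exact Or.inr (hAut g hg _ _ h)
      tauto
  by_cases h0 : (v0 ∈ Δ) ↔ (g v0 ∈ Δ)
  · left; intro v; have := key v; tauto
  · right
    intro v
    have := key v
    have := mem_part' hbip (g v)
    tauto

lemma mem_Gp_of {A : V → V → Prop} {G Gp : Subgroup (Equiv.Perm V)} {Δ Δ' : Set V}
    (hconn : Connected A) (hAut : PreservesArcs A G) (hbip : IsBipartition A Δ Δ')
    (hGp : ∀ g : Equiv.Perm V, g ∈ Gp ↔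
      (g ∈ G ∧ (∀ v : V, v ∈ Δ ↔ g v ∈ Δ) ∧ (∀ v : V, v ∈ Δ' ↔ g v ∈ Δ')))
    {g : Equiv.Perm V} (hg : g ∈ G) {u : V} (hu : u ∈ Δ) (hu' : g u ∈ Δ) : g ∈ Gp := by
  rcases part_dichotomy hconn hAut hbip hg with h | h
  · rw [hGp]
    refine ⟨hg, h, fun v => ?_⟩
    have h1 := mem_part' hbip v
    have h2 := mem_part' hbip (g v)
    have := h v
    tauto
  · have := (h u).mp hu
    have := mem_part' hbip (g u)
    tauto

lemma reach_map {A : V → V → Prop} {G : Subgroup (Equiv.Perm V)}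
    (hAut : PreservesArcs A G) {g : Equiv.Perm V} (hg : g ∈ G) {u v : V}
    (h : Relation.ReflTransGen A u v) :
    Relation.ReflTransGen A (g u) (g v) :=
  Relation.ReflTransGen.lift g (fun a b hab => hAut g hg a b hab) _ _ h

lemma reach_symm [Finite V] {A : V → V → Prop} {G : Subgroup (Equiv.Perm V)}
    (hAut : PreservesArcs A G) (hvt : VertexTransitive G)
    {u v : V} (h : Relation.ReflTransGen A u v) : Relation.ReflTransGen A v u := by
  obtain ⟨g, hg, hgu⟩ := hvt u v
  subst hgu
  have key : ∀ n : ℕ, Relation.ReflTransGen A (g u) ((g ^ (n + 1)) u) := by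
    intro n
    induction n with
    | zero => simpa using Relation.ReflTransGen.refl
    | succ n ih =>
      refine ih.trans ?_
      have h2 := reach_map hAut (pow_mem hg (n + 1)) h
      have e : (g ^ (n + 1)) (g u) = (g ^ (n + 2)) u := by
        conv_rhs => rw [pow_succ, Equiv.Perm.mul_apply]
      rw [e] at h2
      exact h2
  have hpos : 0 < orderOf g := orderOf_pos g
  obtain ⟨m, hm⟩ : ∃ m, orderOf g = m + 1 := ⟨orderOf g - 1, by omega⟩
  have := key m
  rw [← hm, pow_orderOf_eq_one] at this
  simpa using this

lemma reach_all [Finite V] {A : V → V → Prop} {G : Subgroup (Equiv.Perm V)}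
    (hconn : Connected A) (hAut : PreservesArcs A G) (hvt : VertexTransitive G)
    (u v : V) : Relation.ReflTransGen A u v := by
  induction hconn u v with
  | refl => exact Relation.ReflTransGen.refl
  | tail hb hstep ih =>
    rcases hstep with h | h
    · exact ih.tail h
    · exact ih.trans (reach_symm hAut hvt (Relation.ReflTransGen.single h))

lemma half_reach {A : V → V → Prop} {Δ Δ' : Set V} (hbip : IsBipartition A Δ Δ')
    {u w : V} (hu : u ∈ Δ) (h : Relation.ReflTransGen A u w) :
    (w ∈ Δ → Relation.ReflTransGen (halfArc A Δ Δ') u w) ∧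
    (w ∈ Δ' → ∃ x ∈ Δ, Relation.ReflTransGen (halfArc A Δ Δ') u x ∧ A x w) := by
  induction h with
  | refl =>
    exact ⟨fun _ => Relation.ReflTransGen.refl,
      fun hw => absurd hu ((mem_part' hbip u).mp hw)⟩
  | @tail b c hb hbc ih =>
    rcases hbip.2.2 _ _ hbc with ⟨h1, h2⟩ | ⟨h1, h2⟩
    · exact ⟨fun hc => absurd hc ((mem_part' hbip c).mp h2),
        fun _ => ⟨b, h1, ih.1 h1, hbc⟩⟩
    · obtain ⟨x, hx, hrx, hxb⟩ := ih.2 h1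
      have harc : halfArc A Δ Δ' x c := ⟨hx, h2, b, h1, hxb, hbc⟩
      exact ⟨fun _ => hrx.tail harc,
        fun hc' => absurd h2 ((mem_part' hbip c).mp hc')⟩


lemma exists_out {A : V → V → Prop} {G : Subgroup (Equiv.Perm V)}
    (hAut : PreservesArcs A G) (hvt : VertexTransitive G)
    {a b : V} (hab : A a b) (x : V) : ∃ y, A x y := by
  obtain ⟨g, hg, hga⟩ := hvt a x
  exact ⟨g b, hga ▸ hAut g hg _ _ hab⟩

lemma exists_in {A : V → V → Prop} {G : Subgroup (Equiv.Perm V)}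
    (hAut : PreservesArcs A G) (hvt : VertexTransitive G)
    {a b : V} (hab : A a b) (x : V) : ∃ y, A y x := by
  obtain ⟨g, hg, hgb⟩ := hvt b x
  exact ⟨g a, hgb ▸ hAut g hg _ _ hab⟩

lemma arcTransitive_of_le {A : V → V → Prop} {G : Subgroup (Equiv.Perm V)} {s : ℕ}
    (hat : ArcTransitive A G s) (onb : V → V) (honb : ∀ v, A v (onb v))
    {m : ℕ} (hm : m ≤ s) : ArcTransitive A G m := by
  classical
  -- extension of an m-arc to an ℕ-indexed arc sequence
  let F : (Fin (m + 1) → V) → ℕ → V := fun f n =>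
    Nat.rec (f ⟨0, by omega⟩)
      (fun i x => if h : i + 1 ≤ m then f ⟨i + 1, by omega⟩ else onb x) n
  have hFle : ∀ f : Fin (m + 1) → V, ∀ n : ℕ, ∀ h : n ≤ m, F f n = f ⟨n, by omega⟩ := by
    intro f n h
    induction n with
    | zero => rfl
    | succ k ih =>
      show (if h : k + 1 ≤ m then f ⟨k + 1, by omega⟩ else onb (F f k)) = _
      rw [dif_pos h]
  have hFarc : ∀ f : Fin (m + 1) → V, IsArcSeq A m f → ∀ i : ℕ, A (F f i) (F f (i + 1)) := by
    intro f hf i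
    by_cases h : i + 1 ≤ m
    · have e1 : F f i = f ⟨i, by omega⟩ := hFle f i (by omega)
      have e2 : F f (i + 1) = f ⟨i + 1, by omega⟩ := hFle f (i + 1) h
      rw [e1, e2]
      exact hf ⟨i, by omega⟩
    · have e2 : F f (i + 1) = onb (F f i) := by
        show (if h : i + 1 ≤ m then _ else onb (F f i)) = onb (F f i)
        rw [dif_neg h]
      rw [e2]
      exact honb _
  intro p q hp hq
  obtain ⟨g, hg, hgi⟩ := hat (fun j : Fin (s + 1) => F p j.val) (fun j => F q j.val)
    (fun j => hFarc p hp j.val) (fun j => hFarc q hq j.val)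
  refine ⟨g, hg, fun i => ?_⟩
  have := hgi ⟨i.val, by omega⟩
  simp only at this
  rw [hFle p i.val (by omega), hFle q i.val (by omega)] at this
  exact this

theorem bipartite_half
    [Finite V] (A : V → V → Prop) (G Gp : Subgroup (Equiv.Perm V)) (s : ℕ)
    (Δ Δ' : Set V)
    (hdig : IsDigraph A) (hconn : Connected A) (hAut : PreservesArcs A G)
    (hvt : VertexTransitive G) (hs : 4 ≤ s) (hat : ArcTransitive A G s)
    (hbip : IsBipartition A Δ Δ')
    -- G⁺ is the subgroup of G fixing Δ and Δ' setwise
    (hGp : ∀ g : Equiv.Perm V, g ∈ Gp ↔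
      (g ∈ G ∧ (∀ v : V, v ∈ Δ ↔ g v ∈ Δ) ∧ (∀ v : V, v ∈ Δ' ↔ g v ∈ Δ')))
    -- and it has index 2 in G
    (hidx : (Gp.subgroupOf G).index = 2) :
    -- the bipartite half Γ' = (Δ, A₂) is connected
    (∀ u w : V, u ∈ Δ → w ∈ Δ →
      Relation.ReflTransGen
        (fun a b => halfArc A Δ Δ' a b ∨ halfArc A Δ Δ' b a) u w) ∧
    -- G⁺ preserves the arc set A₂
    (∀ g ∈ Gp, ∀ u w : V, halfArc A Δ Δ' u w → halfArc A Δ Δ' (g u) (g w)) ∧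
    -- G⁺ is transitive on Δ
    (∀ u ∈ Δ, ∀ w ∈ Δ, ∃ g ∈ Gp, g u = w) ∧
    -- G⁺ is transitive on the ⌊s/2⌋-arcs of Γ'
    (∀ p q : Fin (s / 2 + 1) → V,
      IsArcSeq (halfArc A Δ Δ') (s / 2) p → IsArcSeq (halfArc A Δ Δ') (s / 2) q →
      ∃ g ∈ Gp, ∀ i : Fin (s / 2 + 1), g (p i) = q i) ∧
    -- and either Γ' is a digraph, or Γ ≅ C₄→, G ≅ Z₄, |Δ| = 2 and Γ' is the complete
    -- graph K₂ (with both ordered pairs of the two vertices of Δ as arcs)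
    (IsDigraph (halfArc A Δ Δ') ∨
      (IsoDirectedCycle A 4 ∧ Nonempty (G ≃* Multiplicative (ZMod 4)) ∧
        Δ.ncard = 2 ∧
        (∀ u w : V, halfArc A Δ Δ' u w ↔ (u ∈ Δ ∧ w ∈ Δ ∧ u ≠ w)))) := by
  classical
  -- A is nonempty, else Gp.subgroupOf G has index 1
  have hA : ∃ a b, A a b := by
    by_contra hno
    push_neg at hno
    have hsub : ∀ a b : V, a = b := by
      intro a b
      induction hconn a b with
      | refl => rfl
      | tail hb hstep ih =>
        rcases hstep with h' | h' <;> exact absurd h' (hno _ _)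
    have htop : Gp.subgroupOf G = ⊤ := by
      ext x
      simp only [Subgroup.mem_subgroupOf, Subgroup.mem_top, iff_true]
      have hx1 : (x : Equiv.Perm V) = 1 := Equiv.ext fun v => hsub _ _
      rw [hx1]
      exact Gp.one_mem
    rw [htop, Subgroup.index_top] at hidx
    omega
  obtain ⟨a0, b0, hab0⟩ := hA
  -- out- and in-neighbour functions
  have honb' : ∀ x : V, ∃ y, A x y := exists_out hAut hvt hab0
  have hinb' : ∀ x : V, ∃ y, A y x := exists_in hAut hvt hab0
  choose onb honb using honb'
  choose inb hinb using hinb'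
  refine ⟨?_, ?_, ?_, ?_, ?_⟩
  · -- connectivity of the bipartite half
    intro u w hu hw
    have hr := reach_all hconn hAut hvt u w
    exact Relation.ReflTransGen.mono (fun a b h => Or.inl h) _ _ ((half_reach hbip hu hr).1 hw)
  · -- Gp preserves halfArc
    intro g hg u w ⟨hu, hw, v, hv, h1, h2⟩
    obtain ⟨hgG, hΔ, hΔ'⟩ := (hGp g).mp hg
    exact ⟨(hΔ u).mp hu, (hΔ w).mp hw, g v, (hΔ' v).mp hv,
      hAut g hgG _ _ h1, hAut g hgG _ _ h2⟩
  · -- Gp transitive on Δ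
    intro u hu w hw
    obtain ⟨g, hg, hgu⟩ := hvt u w
    exact ⟨g, mem_Gp_of hconn hAut hbip hGp hg hu (hgu ▸ hw), hgu⟩
  · -- Gp transitive on (s/2)-arcs of the half
    set t := s / 2 with ht_def
    intro p q hp hq
    have ht1 : 1 ≤ t := by omega
    have h2t : 2 * t ≤ s := by omega
    have pcast : ∀ {k k' : ℕ} (h : k < t + 1) (h' : k' < t + 1), k = k' →
        p ⟨k, h⟩ = p ⟨k', h'⟩ := by intro k k' h h' e; subst e; rfl
    have qcast : ∀ {k k' : ℕ} (h : k < t + 1) (h' : k' < t + 1), k = k' →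
        q ⟨k, h⟩ = q ⟨k', h'⟩ := by intro k k' h h' e; subst e; rfl
    have hvpe : ∀ i : Fin t, ∃ v, v ∈ Δ' ∧ A (p i.castSucc) v ∧ A v (p i.succ) := by
      intro i; obtain ⟨-, -, v, hv, h1, h2⟩ := hp i; exact ⟨v, hv, h1, h2⟩
    have hvqe : ∀ i : Fin t, ∃ v, v ∈ Δ' ∧ A (q i.castSucc) v ∧ A v (q i.succ) := by
      intro i; obtain ⟨-, -, v, hv, h1, h2⟩ := hq i; exact ⟨v, hv, h1, h2⟩
    choose vp hvp1 hvp2 hvp3 using hvpe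
    choose vq hvq1 hvq2 hvq3 using hvqe
    let PN : ℕ → V := fun n => if n % 2 = 0 then p ⟨min (n / 2) t, by omega⟩
      else vp ⟨min (n / 2) (t - 1), by omega⟩
    let QN : ℕ → V := fun n => if n % 2 = 0 then q ⟨min (n / 2) t, by omega⟩
      else vq ⟨min (n / 2) (t - 1), by omega⟩
    have vpcast : ∀ {k k' : ℕ} (h : k < t) (h' : k' < t), k = k' →
        vp ⟨k, h⟩ = vp ⟨k', h'⟩ := by intro k k' h h' e; subst e; rfl
    have vqcast : ∀ {k k' : ℕ} (h : k < t) (h' : k' < t), k = k' →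
        vq ⟨k, h⟩ = vq ⟨k', h'⟩ := by intro k k' h h' e; subst e; rfl
    have hPN : ∀ n < 2 * t, A (PN n) (PN (n + 1)) := by
      intro n hn
      rcases Nat.even_or_odd n with ⟨k, hk⟩ | ⟨k, hk⟩
      · have e1 : PN n = p ⟨k, by omega⟩ := by
          show (if n % 2 = 0 then _ else _) = _
          rw [if_pos (by omega)]
          exact pcast _ _ (by omega)
        have e2 : PN (n + 1) = vp ⟨k, by omega⟩ := by
          show (if (n + 1) % 2 = 0 then _ else _) = _
          rw [if_neg (by omega)]
          exact vpcast _ _ (by omega)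
        rw [e1, e2]
        exact hvp2 ⟨k, by omega⟩
      · have e1 : PN n = vp ⟨k, by omega⟩ := by
          show (if n % 2 = 0 then _ else _) = _
          rw [if_neg (by omega)]
          exact vpcast _ _ (by omega)
        have e2 : PN (n + 1) = p ⟨k + 1, by omega⟩ := by
          show (if (n + 1) % 2 = 0 then _ else _) = _
          rw [if_pos (by omega)]
          exact pcast _ _ (by omega)
        rw [e1, e2]
        exact hvp3 ⟨k, by omega⟩
    have hQN : ∀ n < 2 * t, A (QN n) (QN (n + 1)) := by
      intro n hn
      rcases Nat.even_or_odd n with ⟨k, hk⟩ | ⟨k, hk⟩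
      · have e1 : QN n = q ⟨k, by omega⟩ := by
          show (if n % 2 = 0 then _ else _) = _
          rw [if_pos (by omega)]
          exact qcast _ _ (by omega)
        have e2 : QN (n + 1) = vq ⟨k, by omega⟩ := by
          show (if (n + 1) % 2 = 0 then _ else _) = _
          rw [if_neg (by omega)]
          exact vqcast _ _ (by omega)
        rw [e1, e2]
        exact hvq2 ⟨k, by omega⟩
      · have e1 : QN n = vq ⟨k, by omega⟩ := by
          show (if n % 2 = 0 then _ else _) = _
          rw [if_neg (by omega)]
          exact vqcast _ _ (by omega)
        have e2 : QN (n + 1) = q ⟨k + 1, by omega⟩ := by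
          show (if (n + 1) % 2 = 0 then _ else _) = _
          rw [if_pos (by omega)]
          exact qcast _ _ (by omega)
        rw [e1, e2]
        exact hvq3 ⟨k, by omega⟩
    have hat2t : ArcTransitive A G (2 * t) := arcTransitive_of_le hat onb honb h2t
    obtain ⟨g, hg, hgi⟩ := hat2t (fun j : Fin (2 * t + 1) => PN j.val)
      (fun j => QN j.val) (fun j => hPN j.val j.isLt) (fun j => hQN j.val j.isLt)
    have hmap : ∀ i : Fin (t + 1), g (p i) = q i := by
      intro i
      have key := hgi ⟨2 * i.val, by omega⟩
      simp only at key
      have e1 : PN (2 * i.val) = p i := by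
        show (if (2 * i.val) % 2 = 0 then _ else _) = _
        rw [if_pos (by omega)]
        exact pcast _ _ (by omega)
      have e2 : QN (2 * i.val) = q i := by
        show (if (2 * i.val) % 2 = 0 then _ else _) = _
        rw [if_pos (by omega)]
        exact qcast _ _ (by omega)
      rw [e1, e2] at key
      exact key
    have hp0 : p ⟨0, by omega⟩ ∈ Δ := (hp ⟨0, by omega⟩).1
    have hq0 : q ⟨0, by omega⟩ ∈ Δ := (hq ⟨0, by omega⟩).1
    have hgp : g ∈ Gp := by
      refine mem_Gp_of hconn hAut hbip hGp hg hp0 ?_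
      rw [hmap ⟨0, by omega⟩]
      exact hq0
    exact ⟨g, hgp, hmap⟩
  · -- the dichotomy
    by_cases hD : IsDigraph (halfArc A Δ Δ')
    · exact Or.inl hD
    right
    unfold IsDigraph at hD
    push_neg at hD
    obtain ⟨u, w, huw0, hwu0⟩ := hD
    obtain ⟨huΔ, hwΔ, v, hvΔ', hA1, hA2⟩ := huw0
    obtain ⟨-, -, v', hv'Δ', hA3, hA4⟩ := hwu0
    have hat4 : ArcTransitive A G 4 := arcTransitive_of_le hat onb honb hs
    let c : Fin 5 → V := fun i => if i.val = 0 then u else if i.val = 1 then v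
      else if i.val = 2 then w else if i.val = 3 then v' else u
    have hc : IsArcSeq A 4 c := by
      intro i
      rcases i with ⟨iv, hiv⟩
      interval_cases iv
      · exact hA1
      · exact hA2
      · exact hA3
      · exact hA4
    have closed4 : ∀ x : Fin 5 → V, IsArcSeq A 4 x →
        x ⟨4, by omega⟩ = x ⟨0, by omega⟩ := by
      intro x hx
      obtain ⟨g, hg, hgi⟩ := hat4 c x hc hx
      have e0 := hgi ⟨0, by omega⟩
      have e4 := hgi ⟨4, by omega⟩
      rw [← e0, ← e4]
      rfl
    have unique_out : ∀ a b b' : V, A a b → A a b' → b = b' := by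
      intro a b b' h1 h2
      let x : V → Fin 5 → V := fun bb i => if i.val = 0 then inb (inb (inb a))
        else if i.val = 1 then inb (inb a) else if i.val = 2 then inb a
        else if i.val = 3 then a else bb
      have hx : ∀ bb, A a bb → IsArcSeq A 4 (x bb) := by
        intro bb hbb i
        rcases i with ⟨iv, hiv⟩
        interval_cases iv
        · exact hinb _
        · exact hinb _
        · exact hinb _
        · exact hbb
      have e1 := closed4 (x b) (hx b h1)
      have e2 := closed4 (x b') (hx b' h2)
      exact e1.trans e2.symm
    have harc_iff : ∀ a b : V, A a b ↔ b = onb a := by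
      intro a b
      exact ⟨fun h => unique_out a b (onb a) h (honb a), fun e => e ▸ honb a⟩
    have hσ4 : ∀ x : V, onb (onb (onb (onb x))) = x := by
      intro x
      let y : Fin 5 → V := fun i => if i.val = 0 then x else if i.val = 1 then onb x
        else if i.val = 2 then onb (onb x) else if i.val = 3 then onb (onb (onb x))
        else onb (onb (onb (onb x)))
      have hy : IsArcSeq A 4 y := by
        intro i
        rcases i with ⟨iv, hiv⟩
        interval_cases iv
        · exact honb _
        · exact honb _
        · exact honb _
        · exact honb _
      exact closed4 y hy
    have hv : v = onb u := (harc_iff u v).mp hA1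
    have hw' : w = onb v := (harc_iff v w).mp hA2
    have hv'2 : v' = onb w := (harc_iff w v').mp hA3
    have hu4 : u = onb v' := (harc_iff v' u).mp hA4
    have hm := mem_part' hbip
    have huw : u ≠ w := by rintro rfl; exact hdig _ _ hA1 hA2
    have hvv' : v ≠ v' := by rintro rfl; exact hdig _ _ hA2 hA3
    have huv : u ≠ v := fun e => (hm v).mp hvΔ' (e ▸ huΔ)
    have huv' : u ≠ v' := fun e => (hm v').mp hv'Δ' (e ▸ huΔ)
    have hwv : w ≠ v := fun e => (hm v).mp hvΔ' (e ▸ hwΔ)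
    have hwv' : w ≠ v' := fun e => (hm v').mp hv'Δ' (e ▸ hwΔ)
    have hstep_set : ∀ y : V, (y = u ∨ y = v ∨ y = w ∨ y = v') →
        (onb y = u ∨ onb y = v ∨ onb y = w ∨ onb y = v') := by
      rintro y (rfl | rfl | rfl | rfl)
      · exact Or.inr (Or.inl hv.symm)
      · exact Or.inr (Or.inr (Or.inl hw'.symm))
      · exact Or.inr (Or.inr (Or.inr hv'2.symm))
      · exact Or.inl hu4.symm
    have horb : ∀ x : V, x = u ∨ x = v ∨ x = w ∨ x = v' := by
      intro x
      induction hconn u x with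
      | refl => exact Or.inl rfl
      | @tail b cc hb hstep ih =>
        rcases hstep with h | h
        · rw [(harc_iff b cc).mp h]
          exact hstep_set b ih
        · have hb3 : cc = onb (onb (onb b)) := by
            rw [(harc_iff cc b).mp h, hσ4]
          rw [hb3]
          exact hstep_set _ (hstep_set _ (hstep_set _ ih))
    -- an explicit isomorphism with ZMod 4
    let fz : ZMod 4 → V := fun k => if k = 0 then u else if k = 1 then v
      else if k = 2 then w else v'
    let ez : V → ZMod 4 := fun x => if x = u then 0 else if x = v then 1
      else if x = w then 2 else 3
    have hfz0 : fz 0 = u := if_pos rfl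
    have hfz1 : fz 1 = v := by
      show (if (1 : ZMod 4) = 0 then u else if (1 : ZMod 4) = 1 then v
        else if (1 : ZMod 4) = 2 then w else v') = v
      rw [if_neg (by decide), if_pos rfl]
    have hfz2 : fz 2 = w := by
      show (if (2 : ZMod 4) = 0 then u else if (2 : ZMod 4) = 1 then v
        else if (2 : ZMod 4) = 2 then w else v') = w
      rw [if_neg (by decide), if_neg (by decide), if_pos rfl]
    have hfz3 : fz 3 = v' := by
      show (if (3 : ZMod 4) = 0 then u else if (3 : ZMod 4) = 1 then v
        else if (3 : ZMod 4) = 2 then w else v') = v'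
      rw [if_neg (by decide), if_neg (by decide), if_neg (by decide)]
    have hezu : ez u = 0 := if_pos rfl
    have hezv : ez v = 1 := by
      show (if v = u then (0 : ZMod 4) else if v = v then 1 else if v = w then 2
        else 3) = 1
      rw [if_neg (fun e => huv e.symm), if_pos rfl]
    have hezw : ez w = 2 := by
      show (if w = u then (0 : ZMod 4) else if w = v then 1 else if w = w then 2
        else 3) = 2
      rw [if_neg (fun e => huw e.symm), if_neg hwv, if_pos rfl]
    have hezv' : ez v' = 3 := by
      show (if v' = u then (0 : ZMod 4) else if v' = v then 1 else if v' = w then 2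
        else 3) = 3
      rw [if_neg (fun e => huv' e.symm), if_neg (fun e => hvv' e.symm),
        if_neg (fun e => hwv' e.symm)]
    have hleft : ∀ x : V, fz (ez x) = x := by
      intro x
      rcases horb x with rfl | rfl | rfl | rfl
      · rw [hezu, hfz0]
      · rw [hezv, hfz1]
      · rw [hezw, hfz2]
      · rw [hezv', hfz3]
    have hright : ∀ k : ZMod 4, ez (fz k) = k := by
      have h4 : ∀ k : ZMod 4, k = 0 ∨ k = 1 ∨ k = 2 ∨ k = 3 := by decide
      intro k
      rcases h4 k with rfl | rfl | rfl | rfl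
      · rw [hfz0, hezu]
      · rw [hfz1, hezv]
      · rw [hfz2, hezw]
      · rw [hfz3, hezv']
    let e : V ≃ ZMod 4 := ⟨ez, fz, hleft, hright⟩
    have hfz_onb : ∀ a : V, fz (ez a + 1) = onb a := by
      intro a
      rcases horb a with rfl | rfl | rfl | rfl
      · rw [hezu, show (0 : ZMod 4) + 1 = 1 from by decide, hfz1]; exact hv
      · rw [hezv, show (1 : ZMod 4) + 1 = 2 from by decide, hfz2]; exact hw'
      · rw [hezw, show (2 : ZMod 4) + 1 = 3 from by decide, hfz3]; exact hv'2
      · rw [hezv', show (3 : ZMod 4) + 1 = 0 from by decide, hfz0]; exact hu4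
    have hiso : IsoDirectedCycle A 4 := by
      refine ⟨e, fun a b => ?_⟩
      show A a b ↔ ez b = ez a + 1
      rw [harc_iff a b]
      constructor
      · rintro rfl
        have h2 : ez (fz (ez a + 1)) = ez a + 1 := hright _
        rw [hfz_onb a] at h2
        exact h2
      · intro h
        have h2 : fz (ez b) = fz (ez a + 1) := by rw [h]
        rw [hleft b, hfz_onb a] at h2
        exact h2
    have hΔeq : Δ = {u, w} := by
      ext x
      simp only [Set.mem_insert_iff, Set.mem_singleton_iff]
      constructor
      · intro hx
        rcases horb x with h | h | h | h
        · exact Or.inl h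
        · rw [h] at hx; exact absurd hx ((hm v).mp hvΔ')
        · exact Or.inr h
        · rw [h] at hx; exact absurd hx ((hm v').mp hv'Δ')
      · rintro (rfl | rfl)
        · exact huΔ
        · exact hwΔ
    have hncard : Δ.ncard = 2 := by rw [hΔeq]; exact Set.ncard_pair huw
    have hhalf : ∀ a b : V, halfArc A Δ Δ' a b ↔ (a ∈ Δ ∧ b ∈ Δ ∧ a ≠ b) := by
      intro a b
      constructor
      · rintro ⟨ha, hb, x, hx, h1, h2⟩
        refine ⟨ha, hb, ?_⟩
        have hb2 : b = onb (onb a) := by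
          rw [(harc_iff x b).mp h2, (harc_iff a x).mp h1]
        rw [hΔeq] at ha
        simp only [Set.mem_insert_iff, Set.mem_singleton_iff] at ha
        rcases ha with rfl | rfl
        · have hbw : b = w := by rw [hb2, ← hv, ← hw']
          rw [hbw]; exact huw
        · have hbu : b = u := by rw [hb2, ← hv'2, ← hu4]
          rw [hbu]; exact huw.symm
      · rintro ⟨ha, hb, hne⟩
        rw [hΔeq] at ha hb
        simp only [Set.mem_insert_iff, Set.mem_singleton_iff] at ha hb
        rcases ha with rfl | rfl <;> rcases hb with rfl | rfl
        · exact absurd rfl hne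
        · exact ⟨huΔ, hwΔ, v, hvΔ', hA1, hA2⟩
        · exact ⟨hwΔ, huΔ, v', hv'Δ', hA3, hA4⟩
        · exact absurd rfl hne
    -- the group is cyclic of order 4
    have hcomm : ∀ g : Equiv.Perm V, g ∈ G → ∀ x : V, g (onb x) = onb (g x) := by
      intro g hg x
      exact (harc_iff (g x) (g (onb x))).mp (hAut g hg _ _ (honb x))
    have hdet : ∀ g h : Equiv.Perm V, g ∈ G → h ∈ G → g u = h u → g = h := by
      intro g h hg hh he
      ext x
      rcases horb x with rfl | rfl | rfl | rfl
      · exact he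
      · rw [hv, hcomm g hg, hcomm h hh, he]
      · rw [hw', hv, hcomm g hg, hcomm g hg, hcomm h hh, hcomm h hh, he]
      · rw [hv'2, hw', hv, hcomm g hg, hcomm g hg, hcomm g hg,
          hcomm h hh, hcomm h hh, hcomm h hh, he]
    have hez_onb : ∀ y : V, ez (onb y) = ez y + 1 := by
      intro y
      rw [← hfz_onb y, hright]
    have hkey : ∀ g : Equiv.Perm V, g ∈ G → ∀ a : V, ez (g a) = ez (g u) + ez a := by
      intro g hg a
      rcases horb a with rfl | rfl | rfl | rfl
      · rw [hezu, add_zero]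
      · rw [hezv, hv, hcomm g hg, hez_onb]
      · rw [hezw, hw', hv, hcomm g hg, hcomm g hg, hez_onb, hez_onb, add_assoc,
          show (1 : ZMod 4) + 1 = 2 from by decide]
      · rw [hezv', hv'2, hw', hv, hcomm g hg, hcomm g hg, hcomm g hg, hez_onb,
          hez_onb, hez_onb, add_assoc, add_assoc,
          show (1 : ZMod 4) + (1 + 1) = 3 from by decide]
    let φ : G →* Multiplicative (ZMod 4) :=
      { toFun := fun g => Multiplicative.ofAdd (ez ((g : Equiv.Perm V) u))
        map_one' := by
          simp only [OneMemClass.coe_one, Equiv.Perm.coe_one, id_eq]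
          rw [hezu]
          rfl
        map_mul' := by
          intro g h
          simp only [Subgroup.coe_mul, Equiv.Perm.mul_apply]
          rw [hkey (g : Equiv.Perm V) g.2 ((h : Equiv.Perm V) u)]
          rfl }
    have hinj : Function.Injective φ := by
      intro g h he
      have h1 : Multiplicative.ofAdd (ez ((g : Equiv.Perm V) u)) =
          Multiplicative.ofAdd (ez ((h : Equiv.Perm V) u)) := he
      have h2 : ez ((g : Equiv.Perm V) u) = ez ((h : Equiv.Perm V) u) :=
        Multiplicative.ofAdd.injective h1
      have h3 : (g : Equiv.Perm V) u = (h : Equiv.Perm V) u := by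
        rw [← hleft ((g : Equiv.Perm V) u), h2, hleft]
      exact Subtype.ext (hdet _ _ g.2 h.2 h3)
    have hsurj : Function.Surjective φ := by
      intro k
      obtain ⟨g, hg, hgu⟩ := hvt u (fz (Multiplicative.toAdd k))
      refine ⟨⟨g, hg⟩, ?_⟩
      show Multiplicative.ofAdd (ez (g u)) = k
      rw [hgu, hright]
      rfl
    exact ⟨hiso, ⟨MulEquiv.ofBijective φ ⟨hinj, hsurj⟩⟩, hncard, hhalf⟩


end ArcTransDigraph
end

section
/- Let Γ = (V,A) be a finite connected bipartite digraph with parts Δ, Δ', let G ≤ Aut(Γ) be vertex-transitive, and suppose Γ is (G,s)-arc-transitive with s ≥ 4. Let G^+ be the index-2 subgroup of G fixing Δ and Δ' setwise, and let Γ' = (Δ, A_2) be the bipartite half on Δ. If no G-normal quotient of Γ is isomorphic to a directed cycle C_r→ with r ≥ 3, then no G^+-normal quotient of Γ' is isomorphic to a directed cycle C_r→ with r ≥ 3. -/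
/-!
Statement 0: normal quotients of (G,s)-arc-transitive digraphs (Proposition p:quot(a)).
-/

namespace ArcTransDigraph

variable {V : Type*}

/-- Two points of `Δ` lie in the same `N`-orbit. -/
def deltaRel (N : Subgroup (Equiv.Perm V)) (Δ : Set V) : ↥Δ → ↥Δ → Prop :=
  fun x y => ∃ n ∈ N, n (x : V) = (y : V)

/-- The arc set of the quotient `Γ'_N` of the bipartite half `Γ' = (Δ, A₂)` by the
`N`-orbit partition of `Δ`. -/
def deltaQuotArc (A : V → V → Prop) (Δ Δ' : Set V) (N : Subgroup (Equiv.Perm V)) :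
    Quot (deltaRel N Δ) → Quot (deltaRel N Δ) → Prop :=
  fun W W' => ∃ x y : ↥Δ, Quot.mk _ x = W ∧ Quot.mk _ y = W' ∧
    halfArc A Δ Δ' (x : V) (y : V)

theorem bipartite_half_no_cycle_quotient
    [Finite V] (A : V → V → Prop) (G Gp : Subgroup (Equiv.Perm V)) (s : ℕ)
    (Δ Δ' : Set V)
    (hdig : IsDigraph A) (hconn : Connected A) (hAut : PreservesArcs A G)
    (hvt : VertexTransitive G) (hs : 4 ≤ s) (hat : ArcTransitive A G s)
    (hbip : IsBipartition A Δ Δ')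
    (hGp : ∀ g : Equiv.Perm V, g ∈ Gp ↔
      (g ∈ G ∧ (∀ v : V, v ∈ Δ ↔ g v ∈ Δ) ∧ (∀ v : V, v ∈ Δ' ↔ g v ∈ Δ')))
    (hidx : (Gp.subgroupOf G).index = 2)
    -- no G-normal quotient of Γ is isomorphic to a directed cycle C_r→ with r ≥ 3
    (hnc : ∀ r : ℕ, 3 ≤ r → ∀ M : Subgroup (Equiv.Perm V), NormalIn M G →
      (¬ ∀ u v : V, ∃ m ∈ M, m u = v) → ¬ IsoDirectedCycle (quotArc A M) r) :
    -- then no G⁺-normal quotient of the bipartite half Γ' = (Δ, A₂) is isomorphic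
    -- to a directed cycle C_r→ with r ≥ 3
    ∀ r : ℕ, 3 ≤ r → ∀ N : Subgroup (Equiv.Perm V), NormalIn N Gp →
      (¬ ∀ x ∈ Δ, ∀ y ∈ Δ, ∃ n ∈ N, n x = y) →
      ¬ IsoDirectedCycle (deltaQuotArc A Δ Δ' N) r := by
  classical
  intro r hr N hN hNtr hiso
  obtain ⟨e, he⟩ := hiso
  haveI : NeZero r := ⟨by omega⟩
  haveI : Fact (1 < r) := ⟨by omega⟩
  haveI : Fact (1 < 2 * r) := ⟨by omega⟩
  -- there is at least one arc in the quotient cycle, hence an arc in Γ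
  have harc0 : deltaQuotArc A Δ Δ' N (e.symm 0) (e.symm 1) := by
    rw [he]; simp
  obtain ⟨x0, y0, -, -, hhalf0⟩ := harc0
  obtain ⟨hx0Δ, hy0Δ, v0, hv0Δ', hA0, hA0'⟩ := hhalf0
  obtain ⟨hdisj, huniv, hparts⟩ := hbip
  have hmem : ∀ v : V, v ∉ Δ → v ∈ Δ' := by
    intro v h
    have hv : v ∈ Δ ∪ Δ' := huniv ▸ Set.mem_univ v
    rcases hv with h' | h'
    · exact absurd h' h
    · exact h'
  have hnotΔ' : ∀ v : V, v ∈ Δ → v ∉ Δ' := fun v hv => Set.disjoint_left.mp hdisj hv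
  have hAΔ : ∀ u v : V, A u v → u ∈ Δ → v ∈ Δ' := by
    intro u v h hu
    rcases hparts u v h with ⟨_, h2⟩ | ⟨h1, _⟩
    · exact h2
    · exact absurd h1 (hnotΔ' u hu)
  have hAΔ' : ∀ u v : V, A u v → u ∈ Δ' → v ∈ Δ := by
    intro u v h hu
    rcases hparts u v h with ⟨h1, _⟩ | ⟨_, h2⟩
    · exact absurd hu (hnotΔ' u h1)
    · exact h2
  have hAtΔ' : ∀ u v : V, A u v → v ∈ Δ' → u ∈ Δ := by
    intro u v h hv
    rcases hparts u v h with ⟨h1, _⟩ | ⟨h1, h2⟩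
    · exact h1
    · exact absurd hv (hnotΔ' v h2)
  -- every vertex has an out-neighbour and an in-neighbour
  have hout0 : ∀ v : V, ∃ w, A v w := by
    intro v
    obtain ⟨g, hg, hgv⟩ := hvt (x0 : V) v
    exact ⟨g v0, by rw [← hgv]; exact hAut g hg _ _ hA0⟩
  have hin0 : ∀ v : V, ∃ u, A u v := by
    intro v
    obtain ⟨g, hg, hgv⟩ := hvt v0 v
    exact ⟨g (x0 : V), by rw [← hgv]; exact hAut g hg _ _ hA0⟩
  choose out hOut using hout0
  choose inn hIn using hin0
  have hinnΔ : ∀ v : V, v ∉ Δ → inn v ∈ Δ :=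
    fun v h => hAtΔ' _ _ (hIn v) (hmem v h)
  -- the doubling map ZMod r → ZMod (2r)
  set d : ZMod r → ZMod (2 * r) := fun x => 2 * (x.val : ZMod (2 * r)) with hd
  have dstep : ∀ x : ZMod r, d (x + 1) = d x + 2 := by
    intro x
    have hval : (x + 1).val = (x.val + 1) % r := by
      rw [ZMod.val_add, ZMod.val_one]
    by_cases hlt : x.val + 1 < r
    · rw [hd]
      simp only []
      rw [hval, Nat.mod_eq_of_lt hlt]
      push_cast
      ring
    · have hx : x.val + 1 = r := by have := ZMod.val_lt x; omega
      rw [hd]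
      simp only []
      rw [hval, hx, Nat.mod_self]
      have h0 : ((2 * r : ℕ) : ZMod (2 * r)) = 0 := ZMod.natCast_self _
      have : ((x.val : ZMod (2 * r)) + 1) * 2 = 0 := by
        have hcast : ((x.val + 1 : ℕ) : ZMod (2 * r)) = ((r : ℕ) : ZMod (2 * r)) := by
          rw [hx]
        push_cast at hcast
        rw [hcast]
        push_cast at h0
        linear_combination h0
      push_cast
      linear_combination -this
  -- the potential function on Δ
  set φ : ↥Δ → ZMod r := fun x => e (Quot.mk _ x) with hφ
  have hφstep : ∀ x y : ↥Δ, halfArc A Δ Δ' (x : V) (y : V) → φ y = φ x + 1 :=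
    fun x y h => (he _ _).mp ⟨x, y, rfl, rfl, h⟩
  -- extend to all of V
  set ψ : V → ZMod (2 * r) := fun v =>
    if h : v ∈ Δ then d (φ ⟨v, h⟩) else d (φ ⟨inn v, hinnΔ v h⟩) + 1 with hψ
  have hin_eq : ∀ (v : V) (hv : v ∉ Δ), ∀ u : ↥Δ, A (u : V) v →
      φ u = φ ⟨inn v, hinnΔ v hv⟩ := by
    intro v hv u hu
    have hv' : v ∈ Δ' := hmem v hv
    have hwΔ : out v ∈ Δ := hAΔ' v _ (hOut v) hv'
    have h1 : φ ⟨out v, hwΔ⟩ = φ u + 1 :=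
      hφstep u ⟨out v, hwΔ⟩ ⟨u.2, hwΔ, v, hv', hu, hOut v⟩
    have h2 : φ ⟨out v, hwΔ⟩ = φ ⟨inn v, hinnΔ v hv⟩ + 1 :=
      hφstep _ ⟨out v, hwΔ⟩ ⟨hinnΔ v hv, hwΔ, v, hv', hIn v, hOut v⟩
    have := h1.symm.trans h2
    exact add_right_cancel this
  have hstep : ∀ u w : V, A u w → ψ w = ψ u + 1 := by
    intro u w hA'
    by_cases hu : u ∈ Δ
    · have hwΔ' : w ∈ Δ' := hAΔ u w hA' hu
      have hw : w ∉ Δ := fun h => hnotΔ' w h hwΔ'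
      rw [hψ]
      simp only [dif_neg hw, dif_pos hu]
      rw [hin_eq w hw ⟨u, hu⟩ hA']
    · have hu' : u ∈ Δ' := hmem u hu
      have hw : w ∈ Δ := hAΔ' u w hA' hu'
      rw [hψ]
      simp only [dif_pos hw, dif_neg hu]
      have h1 : φ ⟨w, hw⟩ = φ ⟨inn u, hinnΔ u hu⟩ + 1 :=
        hφstep _ _ ⟨hinnΔ u hu, hw, u, hu', hIn u, hA'⟩
      rw [h1, dstep]
      ring
  -- the difference ψ (g v) - ψ v is independent of v, for g ∈ G
  have hconst : ∀ g ∈ G, ∀ v w : V, ψ (g v) - ψ v = ψ (g w) - ψ w := by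
    intro g hg v w
    induction hconn v w with
    | refl => rfl
    | @tail b c _hab hrel ih =>
      have key : ψ (g b) - ψ b = ψ (g c) - ψ c := by
        rcases hrel with h | h
        · rw [hstep _ _ h, hstep _ _ (hAut g hg _ _ h)]; ring
        · rw [hstep _ _ h, hstep _ _ (hAut g hg _ _ h)]; ring
      exact ih.trans key
  -- the subgroup M of elements of G preserving ψ
  set M : Subgroup (Equiv.Perm V) :=
    { carrier := {g : Equiv.Perm V | g ∈ G ∧ ∀ v, ψ (g v) = ψ v}
      one_mem' := ⟨G.one_mem, fun v => rfl⟩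
      mul_mem' := fun {a b} ha hb => ⟨G.mul_mem ha.1 hb.1, fun v => by
        rw [Equiv.Perm.mul_apply, ha.2 (b v), hb.2 v]⟩
      inv_mem' := fun {a} ha => ⟨G.inv_mem ha.1, fun v => by
        have h1 := ha.2 (a⁻¹ v)
        rw [show a (a⁻¹ v) = v from a.apply_symm_apply v] at h1
        exact h1.symm⟩ } with hM
  have hMmem : ∀ g : Equiv.Perm V, g ∈ M ↔ g ∈ G ∧ ∀ v, ψ (g v) = ψ v := by
    intro g; rfl
  have hMnormal : NormalIn M G := by
    constructor
    · intro g hg; exact ((hMmem g).mp hg).1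
    · intro g hg x hx
      obtain ⟨hxG, hxψ⟩ := (hMmem x).mp hx
      refine (hMmem _).mpr ⟨G.mul_mem (G.mul_mem hg hxG) (G.inv_mem hg), fun v => ?_⟩
      have h1 := hconst g hg (x (g⁻¹ v)) (g⁻¹ v)
      rw [hxψ (g⁻¹ v)] at h1
      have h2 : ψ (g (x (g⁻¹ v))) = ψ (g (g⁻¹ v)) := sub_left_inj.mp h1
      rw [show g (g⁻¹ v) = v from g.apply_symm_apply v] at h2
      simpa [Equiv.Perm.mul_apply] using h2
  have hone : (1 : ZMod (2 * r)) ≠ 0 := one_ne_zero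
  -- M is intransitive
  have hMintr : ¬ ∀ u v : V, ∃ m ∈ M, m u = v := by
    intro h
    obtain ⟨m, hm, hmx⟩ := h (x0 : V) v0
    have h1 := ((hMmem m).mp hm).2 (x0 : V)
    rw [hmx] at h1
    have h2 := hstep _ _ hA0
    rw [h1] at h2
    exact hone (by linear_combination -h2)
  -- ψ is surjective
  have hsurj : Function.Surjective ψ := by
    have hplus : ∀ n : ℕ, ∃ v, ψ v = ψ (x0 : V) + (n : ZMod (2 * r)) := by
      intro n
      induction n with
      | zero => exact ⟨(x0 : V), by simp⟩
      | succ k ih =>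
        obtain ⟨v, hv⟩ := ih
        refine ⟨out v, ?_⟩
        rw [hstep v (out v) (hOut v), hv]
        push_cast
        ring
    intro t
    obtain ⟨v, hv⟩ := hplus (t - ψ (x0 : V)).val
    refine ⟨v, ?_⟩
    rw [hv, ZMod.natCast_rightInverse (t - ψ (x0 : V))]
    ring
  -- vertices with the same ψ value are in the same M-orbit
  have hψM : ∀ u v : V, ψ u = ψ v → ∃ m ∈ M, m u = v := by
    intro u v h
    obtain ⟨g, hg, hgu⟩ := hvt u v
    refine ⟨g, (hMmem g).mpr ⟨hg, fun w => ?_⟩, hgu⟩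
    have h1 := hconst g hg w u
    rw [hgu, h, sub_self] at h1
    exact sub_eq_zero.mp h1
  -- ψ is constant on M-orbits
  have hψorb : ∀ a b : V, (MulAction.orbitRel ↥M V).r a b → ψ a = ψ b := by
    intro a b hab
    obtain ⟨m, hm⟩ := hab
    rw [← hm]
    exact ((hMmem (m : Equiv.Perm V)).mp m.2).2 b
  set ebar : Quotient (MulAction.orbitRel ↥M V) → ZMod (2 * r) :=
    Quotient.lift ψ hψorb with hebar
  have hebarmk : ∀ v : V, ebar (Quotient.mk _ v) = ψ v := fun v => rfl
  have hebarinj : Function.Injective ebar := by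
    intro a b
    induction a using Quotient.ind with
    | _ u =>
      induction b using Quotient.ind with
      | _ v =>
        intro h
        rw [hebarmk, hebarmk] at h
        obtain ⟨m, hmM, hmv⟩ := hψM v u h.symm
        exact Quotient.sound ⟨⟨m, hmM⟩, hmv⟩
  have hebarsurj : Function.Surjective ebar := by
    intro t
    obtain ⟨v, hv⟩ := hsurj t
    exact ⟨Quotient.mk _ v, hv⟩
  set e' : Quotient (MulAction.orbitRel ↥M V) ≃ ZMod (2 * r) :=
    Equiv.ofBijective ebar ⟨hebarinj, hebarsurj⟩ with he'
  have he'mk : ∀ v : V, e' (Quotient.mk _ v) = ψ v := fun v => rfl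
  have hiso' : IsoDirectedCycle (quotArc A M) (2 * r) := by
    refine ⟨e', fun a b => ⟨?_, ?_⟩⟩
    · rintro ⟨u, u', hu, hu', hA'⟩
      rw [← hu, ← hu']
      show ψ u' = ψ u + 1
      exact hstep u u' hA'
    · intro h
      obtain ⟨u, hu⟩ := Quotient.exists_rep a
      have h1 : e' (Quotient.mk _ (out u)) = e' b := by
        rw [he'mk, hstep u (out u) (hOut u), ← he'mk u]
        show ψ u + 1 = e' b
        rw [h, ← hu, he'mk]
      have h2 : Quotient.mk _ (out u) = b := e'.injective h1
      exact ⟨u, out u, hu, h2, hOut u⟩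
  exact hnc (2 * r) (by omega) M hMnormal hMintr hiso'

end ArcTransDigraph
end
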